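/- There exists an optimal prefix-free machine that is not universal by adjunction. In particular, given any universal-by-adjunction prefix-free machine U, the machine V defined by V(p0) = V(p1) = U(p) for p ∈ dom(U) with |p| odd, and V(p) = U(p) for p ∈ dom(U) with |p| even, is a prefix-free machine that is optimal but not universal by adjunction. -/

import Mathlib

open scoped ENNReal

namespace Paper

/-- A set of binary strings is prefix-free if no two distinct elements are
comparable under the prefix relation. -/
def PrefixFreeSet (D : Set (List Bool)) : Prop :=
  ∀ σ ∈ D, ∀ τ ∈ D, σ <+: τ → σ = τ

/-- A prefix-free machine: a partial computable function from binary strings to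
binary strings with prefix-free domain. -/
def PrefixFreeMachine (M : List Bool →. List Bool) : Prop :=
  Partrec M ∧ PrefixFreeSet M.Dom

/-- The halting probability `Ω_M = ∑_{σ ∈ dom M} 2^{-|σ|}`. -/
noncomputable def Omega (M : List Bool →. List Bool) : ℝ :=
  ∑' σ : M.Dom, (2 : ℝ) ^ (-((σ : List Bool).length : ℤ))

/-- `K_M(x) = min {|p| : M(p) = x}`, with value `∞` if no description exists. -/
noncomputable def KM (M : List Bool →. List Bool) (x : List Bool) : ℕ∞ :=
  sInf {n : ℕ∞ | ∃ p : List Bool, x ∈ M p ∧ (p.length : ℕ∞) = n}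

/-- A prefix-free machine `U` is optimal if `K_U ≤ K_M + c_M` for every
prefix-free machine `M`. -/
def OptimalMachine (U : List Bool →. List Bool) : Prop :=
  PrefixFreeMachine U ∧
    ∀ M : List Bool →. List Bool, PrefixFreeMachine M →
      ∃ c : ℕ, ∀ x, KM U x ≤ KM M x + (c : ℕ∞)

/-- A standard effective enumeration of all prefix-free machines. -/
def MachineEnumeration (Mach : ℕ → (List Bool →. List Bool)) : Prop :=
  (∀ e, PrefixFreeMachine (Mach e)) ∧
  Partrec₂ Mach ∧
  ∀ M : List Bool →. List Bool, PrefixFreeMachine M → ∃ e, Mach e = M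

/-- `U` is universal by adjunction (relative to the enumeration `Mach`). -/
def UniversalByAdjunction (Mach : ℕ → (List Bool →. List Bool))
    (U : List Bool →. List Bool) : Prop :=
  PrefixFreeMachine U ∧
    ∃ σ : ℕ → List Bool, Computable σ ∧ PrefixFreeSet (Set.range σ) ∧
      ∀ e τ, U (σ e ++ τ) = Mach e τ

/-- A real is left-c.e. if it is the limit of a computable nondecreasing
sequence of rationals. -/
def LeftCE (α : ℝ) : Prop :=
  ∃ q : ℕ → ℚ, Computable q ∧ Monotone q ∧
    Filter.Tendsto (fun n => (q n : ℝ)) Filter.atTop (nhds α)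

/-- A real is right-c.e. if it is the limit of a computable nonincreasing
sequence of rationals. -/
def RightCE (α : ℝ) : Prop :=
  ∃ q : ℕ → ℚ, Computable q ∧ Antitone q ∧
    Filter.Tendsto (fun n => (q n : ℝ)) Filter.atTop (nhds α)

/-- A real is computable if it is both left-c.e. and right-c.e. -/
def ComputableReal (α : ℝ) : Prop := LeftCE α ∧ RightCE α

/-- `e` is an index for the left-c.e. real `α`: in the standard enumeration of
partial computable functions, `e` codes a (total, nondecreasing) sequence of
rationals converging to `α`. -/
def LeftCEIndex (e : ℕ) (α : ℝ) : Prop :=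
  ∃ q : ℕ → ℚ,
    (∀ n, (Denumerable.ofNat Nat.Partrec.Code e).eval n =
        Part.some (Encodable.encode (q n))) ∧
    Monotone q ∧ Filter.Tendsto (fun n => (q n : ℝ)) Filter.atTop (nhds α)

/-- A computably enumerable set. -/
def CEset {α : Type*} [Primcodable α] (S : Set α) : Prop :=
  Partrec fun a => Part.assert (a ∈ S) fun _ => Part.some ()

/-- A Martin-Löf test: a uniformly effectively open sequence of sets of reals
with `λ(V n) ≤ 2^{-n}`. -/
def MLTest (V : ℕ → Set ℝ) : Prop :=
  (∃ S : Set (ℕ × ℚ × ℚ), CEset S ∧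
      ∀ n, V n = ⋃ p ∈ {p : ℚ × ℚ | (n, p.1, p.2) ∈ S},
        Set.Ioo (p.1 : ℝ) (p.2 : ℝ)) ∧
  ∀ n, MeasureTheory.volume (V n) ≤ 2 ^ (-(n : ℤ))

/-- A real is Martin-Löf random if it escapes every Martin-Löf test. -/
def MLRandom (x : ℝ) : Prop := ∀ V : ℕ → Set ℝ, MLTest V → ∃ n, x ∉ V n

/-- The c.e. set of triples generated by the `e`-th partial computable
function (as the domain of that function). -/
def TestSet (e : ℕ) : Set (ℕ × ℚ × ℚ) :=
  {x | ((Denumerable.ofNat Nat.Partrec.Code e).eval (Encodable.encode x)).Dom}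

/-- The sequence of effectively open sets generated by the `e`-th c.e. set of
triples. -/
def TestOfIndex (e : ℕ) : ℕ → Set ℝ := fun n =>
  ⋃ p ∈ {p : ℚ × ℚ | (n, p.1, p.2) ∈ TestSet e}, Set.Ioo (p.1 : ℝ) (p.2 : ℝ)

/-- An effectively optimal Martin-Löf test. -/
def EffectivelyOptimalMLTest (U : ℕ → Set ℝ) : Prop :=
  MLTest U ∧
    ∃ g : ℕ → ℕ, Computable g ∧
      ∀ i, MLTest (TestOfIndex i) → ∀ k, TestOfIndex i (k + g i) ⊆ U k

/-- A semimeasure: a nonnegative function on ℕ whose (partial) sums are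
bounded by 1. -/
def Semimeasure (m : ℕ → ℝ) : Prop :=
  (∀ i, 0 ≤ m i) ∧ ∀ F : Finset ℕ, ∑ i ∈ F, m i ≤ 1

/-- A left-c.e. semimeasure. -/
def LeftCESemimeasure (m : ℕ → ℝ) : Prop :=
  Semimeasure m ∧ CEset {p : ℕ × ℚ | (p.2 : ℝ) < m p.1}

/-- `e` is a c.e. index for the set of rationals lying below the semimeasure
`m`. -/
def SemimeasureIndex (e : ℕ) (m : ℕ → ℝ) : Prop :=
  Semimeasure m ∧
    ∀ p : ℕ × ℚ,
      ((Denumerable.ofNat Nat.Partrec.Code e).eval (Encodable.encode p)).Dom ↔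
        (p.2 : ℝ) < m p.1

/-- A universal left-c.e. semimeasure: one that multiplicatively dominates
every left-c.e. semimeasure. -/
def UniversalSemimeasure (m : ℕ → ℝ) : Prop :=
  LeftCESemimeasure m ∧
    ∀ μ : ℕ → ℝ, LeftCESemimeasure μ →
      ∃ c : ℚ, 0 < c ∧ ∀ i, (c : ℝ) * μ i ≤ m i

/-- Solovay reducibility: `α ⪯_S β` iff `n·β − α` is left-c.e. for some
positive integer `n`. -/
def SolovayLE (α β : ℝ) : Prop :=
  ∃ n : ℕ, 0 < n ∧ LeftCE ((n : ℝ) * β - α)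

/-- The fixed computable bijection between ℕ and binary strings
(`n ↦` the binary expansion of `n+1` with the leading bit removed). -/
def strOfNat (n : ℕ) : List Bool := (Nat.bits (n + 1)).dropLast

lemma KM_le_of {M N : List Bool →. List Bool} {c : ℕ} {x : List Bool}
    (h : ∀ p, x ∈ M p → ∃ q, x ∈ N q ∧ q.length ≤ p.length + c) :
    KM N x ≤ KM M x + (c : ℕ∞) := by
  by_cases hS : {n : ℕ∞ | ∃ p : List Bool, x ∈ M p ∧ (p.length : ℕ∞) = n}.Nonempty
  · obtain ⟨p, hp, hlen⟩ := csInf_mem hS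
    obtain ⟨q, hq, hle⟩ := h p hp
    calc KM N x ≤ (q.length : ℕ∞) := sInf_le ⟨q, hq, rfl⟩
      _ ≤ ((p.length + c : ℕ) : ℕ∞) := by exact_mod_cast hle
      _ = (p.length : ℕ∞) + (c : ℕ∞) := by push_cast; rfl
      _ = KM M x + (c : ℕ∞) := by rw [show ((p.length : ℕ∞)) = KM M x from hlen]
  · have : KM M x = ⊤ := by
      unfold KM
      rw [Set.not_nonempty_iff_eq_empty.mp hS, sInf_empty]
    simp [this]

def decodePF : List Bool → Option (ℕ × List Bool)
  | [] => none
  | false :: q => some (0, q)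
  | true :: q => (decodePF q).map fun p => (p.1 + 1, p.2)

lemma decodePF_encode (e : ℕ) (τ : List Bool) :
    decodePF (List.replicate e true ++ false :: τ) = some (e, τ) := by
  induction e with
  | zero => rfl
  | succ k ih => simp [List.replicate, decodePF, ih]

lemma decodePF_sound : ∀ {q : List Bool} {e : ℕ} {τ : List Bool},
    decodePF q = some (e, τ) → q = List.replicate e true ++ false :: τ := by
  intro q
  induction q with
  | nil => intro e τ h; simp [decodePF] at h
  | cons b l ih =>
    intro e τ h
    cases b with
    | false =>
      simp [decodePF] at h
      obtain ⟨rfl, rfl⟩ := h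
      rfl
    | true =>
      simp [decodePF, Option.map_eq_some_iff] at h
      obtain ⟨a, h1, rfl⟩ := h
      rw [ih h1]
      rfl

lemma decodePF_primrec : Primrec decodePF := by
  have hh : Primrec₂ (fun (_ : List Bool) (x : Bool × List Bool × Option (ℕ × List Bool)) =>
      (bif x.1 then x.2.2.map (fun p => (p.1 + 1, p.2)) else some (0, x.2.1) :
        Option (ℕ × List Bool))) := by
    have hmapfn : Primrec₂ (fun (_ : List Bool × (Bool × List Bool × Option (ℕ × List Bool)))
        (p : ℕ × List Bool) => ((p.1 + 1, p.2) : ℕ × List Bool)) :=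
      ((Primrec.succ.comp (Primrec.fst.comp Primrec.snd)).pair
        (Primrec.snd.comp Primrec.snd)).to₂
    have h1 : Primrec (fun y : List Bool × (Bool × List Bool × Option (ℕ × List Bool)) =>
        (y.2.2.2.map (fun p => (p.1 + 1, p.2)) : Option (ℕ × List Bool))) :=
      Primrec.option_map (Primrec.snd.comp (Primrec.snd.comp Primrec.snd)) hmapfn
    have h2 : Primrec (fun y : List Bool × (Bool × List Bool × Option (ℕ × List Bool)) =>
        (some (0, y.2.2.1) : Option (ℕ × List Bool))) :=
      Primrec.option_some.comp
        ((Primrec.const 0).pair (Primrec.fst.comp (Primrec.snd.comp Primrec.snd)))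
    exact (Primrec.cond (Primrec.fst.comp Primrec.snd) h1 h2).to₂
  have h := Primrec.list_rec (α := List Bool) (β := Bool) (σ := Option (ℕ × List Bool))
    (f := id) Primrec.id (Primrec.const none) hh
  refine h.of_eq ?_
  intro q
  induction q with
  | nil => rfl
  | cons b l ih => cases b <;> simp [decodePF, ← ih]

lemma rep_prefix : ∀ {e e' : ℕ} {τ τ' : List Bool},
    (List.replicate e true ++ false :: τ) <+: (List.replicate e' true ++ false :: τ') →
    e = e' ∧ τ <+: τ' := by
  intro e
  induction e with
  | zero =>
    intro e' τ τ' h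
    cases e' with
    | zero =>
      simp [List.cons_prefix_cons] at h
      exact ⟨rfl, h⟩
    | succ k =>
      simp [List.replicate, List.cons_prefix_cons] at h
  | succ k ih =>
    intro e' τ τ' h
    cases e' with
    | zero => simp [List.replicate, List.cons_prefix_cons] at h
    | succ k' =>
      simp only [List.replicate, List.cons_append, List.cons_prefix_cons] at h
      obtain ⟨e, hτ⟩ := ih h.2
      exact ⟨by omega, hτ⟩

lemma reverse_tail_reverse (q : List Bool) : q.reverse.tail.reverse = q.dropLast := by
  rcases eq_or_ne q [] with rfl | h
  · rfl
  · conv_lhs => rw [← List.dropLast_append_getLast h]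
    simp



def U0 (Mach : ℕ → (List Bool →. List Bool)) : List Bool →. List Bool :=
  fun q => (Part.ofOption (decodePF q)).bind fun p => Mach p.1 p.2

lemma U0_mem {Mach : ℕ → (List Bool →. List Bool)} {q x : List Bool} :
    x ∈ U0 Mach q ↔ ∃ e τ, decodePF q = some (e, τ) ∧ x ∈ Mach e τ := by
  simp only [U0, Part.mem_bind_iff, Part.mem_ofOption, Option.mem_def, Prod.exists]

lemma U0_dom {Mach : ℕ → (List Bool →. List Bool)} {q : List Bool} :
    q ∈ (U0 Mach).Dom ↔ ∃ e τ, decodePF q = some (e, τ) ∧ τ ∈ (Mach e).Dom := by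
  constructor
  · rintro hq
    obtain ⟨x, hx⟩ := (PFun.mem_dom _ _).mp hq
    obtain ⟨e, τ, h1, h2⟩ := U0_mem.mp hx
    exact ⟨e, τ, h1, (PFun.mem_dom _ _).mpr ⟨x, h2⟩⟩
  · rintro ⟨e, τ, h1, h2⟩
    obtain ⟨x, hx⟩ := (PFun.mem_dom _ _).mp h2
    exact (PFun.mem_dom _ _).mpr ⟨x, U0_mem.mpr ⟨e, τ, h1, hx⟩⟩

lemma U0_partrec {Mach : ℕ → (List Bool →. List Bool)} (hM : Partrec₂ Mach) :
    Partrec (U0 Mach) :=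
  (Computable.ofOption decodePF_primrec.to_comp).bind
    (Partrec.comp (show Partrec fun p : ℕ × List Bool => Mach p.1 p.2 from hM) Computable.snd)

lemma U0_pf {Mach : ℕ → (List Bool →. List Bool)} (hMach : MachineEnumeration Mach) :
    PrefixFreeSet (U0 Mach).Dom := by
  intro q hq q' hq' hpre
  obtain ⟨e, τ, hd, hdom⟩ := U0_dom.mp hq
  obtain ⟨e', τ', hd', hdom'⟩ := U0_dom.mp hq'
  rw [decodePF_sound hd, decodePF_sound hd'] at hpre ⊢
  obtain ⟨rfl, hττ'⟩ := rep_prefix hpre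
  rw [(hMach.1 e).2 τ hdom τ' hdom' hττ']

lemma replicate_primrec : Primrec (fun e => List.replicate e true) := by
  have hh : Primrec₂ (fun (_ : ℕ) (x : ℕ × List Bool) => (true :: x.2 : List Bool)) :=
    (Primrec.list_cons.comp (Primrec.const true) (Primrec.snd.comp Primrec.snd)).to₂
  have h := Primrec.nat_rec' (α := ℕ) (f := id) Primrec.id (Primrec.const ([] : List Bool)) hh
  refine h.of_eq ?_
  intro n
  induction n with
  | zero => rfl
  | succ k ih => simpa [List.replicate] using congrArg (true :: ·) ih

lemma U0_uba {Mach : ℕ → (List Bool →. List Bool)} (hMach : MachineEnumeration Mach) :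
    UniversalByAdjunction Mach (U0 Mach) := by
  refine ⟨⟨U0_partrec hMach.2.1, U0_pf hMach⟩,
    fun e => List.replicate e true ++ [false], ?_, ?_, ?_⟩
  · exact (Primrec.list_append.comp replicate_primrec (Primrec.const [false])).to_comp
  · rintro _ ⟨e, rfl⟩ _ ⟨e', rfl⟩ hpre
    have h : (List.replicate e true ++ false :: ([] : List Bool)) <+:
        (List.replicate e' true ++ false :: ([] : List Bool)) := hpre
    obtain ⟨rfl, -⟩ := rep_prefix h
    rfl
  · intro e τ
    have : List.replicate e true ++ [false] ++ τ = List.replicate e true ++ false :: τ := by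
      simp
    rw [this]
    simp [U0, decodePF_encode]



def M0 : List Bool →. List Bool :=
  fun l => Part.ofOption (if l = [false] ∨ l = [true, true] then some [] else none)

lemma M0_dom {l : List Bool} : l ∈ M0.Dom ↔ (l = [false] ∨ l = [true, true]) := by
  by_cases hc : l = [false] ∨ l = [true, true] <;>
    simp [M0, PFun.Dom, hc, Part.ofOption]

lemma M0_pfm : PrefixFreeMachine M0 := by
  constructor
  · have hc : Computable fun l : List Bool =>
        if l = [false] ∨ l = [true, true] then some ([] : List Bool) else none := by
      have hp : PrimrecPred fun l : List Bool => l = [false] ∨ l = [true, true] :=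
        PrimrecPred.or (Primrec.eq.comp Primrec.id (Primrec.const _))
          (Primrec.eq.comp Primrec.id (Primrec.const _))
      exact (Primrec.ite hp (Primrec.const _) (Primrec.const _)).to_comp
    exact hc.ofOption
  · intro σ hσ τ hτ hpre
    rcases M0_dom.mp hσ with rfl | rfl <;> rcases M0_dom.mp hτ with rfl | rfl
    · rfl
    · obtain ⟨t, ht⟩ := hpre; simp at ht
    · have := hpre.length_le; simp at this
    · rfl

lemma M0_false : ([] : List Bool) ∈ M0 [false] := by
  simp [M0, Part.ofOption]

lemma M0_truetrue : ([] : List Bool) ∈ M0 [true, true] := by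
  simp [M0, Part.ofOption]

lemma key (Mach : ℕ → (List Bool →. List Bool)) (hMach : MachineEnumeration Mach)
    (U : List Bool →. List Bool) (hU : UniversalByAdjunction Mach U)
    (V : List Bool →. List Bool) (hVp : Partrec V)
    (hodd : ∀ p ∈ U.Dom, p.length % 2 = 1 →
      V (p ++ [false]) = U p ∧ V (p ++ [true]) = U p)
    (heven : ∀ p ∈ U.Dom, p.length % 2 = 0 → V p = U p)
    (hdom : V.Dom = {q | (∃ p ∈ U.Dom, p.length % 2 = 1 ∧
        (q = p ++ [false] ∨ q = p ++ [true])) ∨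
        (q ∈ U.Dom ∧ q.length % 2 = 0)}) :
    PrefixFreeMachine V ∧ OptimalMachine V ∧ ¬ UniversalByAdjunction Mach V := by
  have hUpf := hU.1.2
  have hmem : ∀ q ∈ V.Dom, (∃ p ∈ U.Dom, p.length % 2 = 1 ∧
      (q = p ++ [false] ∨ q = p ++ [true])) ∨ (q ∈ U.Dom ∧ q.length % 2 = 0) := by
    intro q hq; rw [hdom] at hq; exact hq
  -- prefix-freeness of V
  have hVpf : PrefixFreeSet V.Dom := by
    intro σ hσ τ hτ hpre
    rcases hmem σ hσ with ⟨p, hp, hpodd, hσe⟩ | ⟨hσU, hσev⟩ <;>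
      rcases hmem τ hτ with ⟨q, hq, hqodd, hτe⟩ | ⟨hτU, hτev⟩
    · obtain ⟨b, rfl⟩ : ∃ b, σ = p ++ [b] := by
        rcases hσe with rfl | rfl; exacts [⟨false, rfl⟩, ⟨true, rfl⟩]
      obtain ⟨b', rfl⟩ : ∃ b', τ = q ++ [b'] := by
        rcases hτe with rfl | rfl; exacts [⟨false, rfl⟩, ⟨true, rfl⟩]
      have hpq : p <+: q ++ [b'] := (List.prefix_append p [b]).trans hpre
      by_cases hlen : p.length ≤ q.length
      · have hppq : p <+: q := List.prefix_of_prefix_length_le hpq (List.prefix_append q [b']) hlen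
        obtain rfl := hUpf p hp q hq hppq
        exact hpre.eq_of_length (by simp)
      · exfalso
        have h1 : p.length ≤ q.length + 1 := by simpa using hpq.length_le
        have h2 : p = q ++ [b'] := hpq.eq_of_length (by simp; omega)
        have := congrArg List.length h2
        simp at this
        omega
    · exfalso
      obtain ⟨b, rfl⟩ : ∃ b, σ = p ++ [b] := by
        rcases hσe with rfl | rfl; exacts [⟨false, rfl⟩, ⟨true, rfl⟩]
      have hpτ : p <+: τ := (List.prefix_append p [b]).trans hpre
      obtain rfl := hUpf p hp τ hτU hpτ
      omega
    · exfalso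
      obtain ⟨b', rfl⟩ : ∃ b', τ = q ++ [b'] := by
        rcases hτe with rfl | rfl; exacts [⟨false, rfl⟩, ⟨true, rfl⟩]
      by_cases hlen : σ.length ≤ q.length
      · have hppq : σ <+: q := List.prefix_of_prefix_length_le hpre (List.prefix_append q [b']) hlen
        obtain rfl := hUpf σ hσU q hq hppq
        omega
      · have h1 : σ.length ≤ q.length + 1 := by simpa using hpre.length_le
        have h2 : σ = q ++ [b'] := hpre.eq_of_length (by simp; omega)
        have hqσ : q <+: σ := h2 ▸ List.prefix_append q [b']
        obtain rfl := hUpf q hq σ hσU hqσ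
        have := congrArg List.length h2
        simp at this
    · exact hUpf σ hσU τ hτU hpre
  refine ⟨⟨hVp, hVpf⟩, ⟨⟨hVp, hVpf⟩, ?_⟩, ?_⟩
  · -- optimality
    intro M hM
    obtain ⟨e, he⟩ := hMach.2.2 M hM
    obtain ⟨σf, hσc, hσpf, hσeq⟩ := hU.2
    refine ⟨(σf e).length + 1, fun x => ?_⟩
    have h1 : KM V x ≤ KM U x + (1 : ℕ∞) := by
      refine KM_le_of fun p hp => ?_
      have hpd : p ∈ U.Dom := (PFun.mem_dom _ _).mpr ⟨x, hp⟩
      rcases Nat.mod_two_eq_zero_or_one p.length with hev | hod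
      · exact ⟨p, by rw [heven p hpd hev]; exact hp, by omega⟩
      · exact ⟨p ++ [false], by rw [(hodd p hpd hod).1]; exact hp, by simp⟩
    have h2 : KM U x ≤ KM M x + ((σf e).length : ℕ∞) := by
      refine KM_le_of fun p hp => ?_
      refine ⟨σf e ++ p, ?_, by simp [Nat.add_comm]⟩
      rw [hσeq e p, he]; exact hp
    calc KM V x ≤ KM U x + 1 := h1
      _ ≤ (KM M x + ((σf e).length : ℕ∞)) + 1 := by gcongr
      _ = KM M x + (((σf e).length + 1 : ℕ) : ℕ∞) := by push_cast; rw [add_assoc]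
  · -- not universal by adjunction
    rintro ⟨-, σf, hσc, hσpf, hσeq⟩
    obtain ⟨e, he⟩ := hMach.2.2 M0 M0_pfm
    have h1 : ([] : List Bool) ∈ V (σf e ++ [false]) := by
      rw [hσeq e [false], he]; exact M0_false
    have h2 : ([] : List Bool) ∈ V (σf e ++ [true, true]) := by
      rw [hσeq e [true, true], he]; exact M0_truetrue
    have hev : ∀ q ∈ V.Dom, q.length % 2 = 0 := by
      rw [hdom]
      rintro q (⟨p, hp, hpo, (rfl | rfl)⟩ | ⟨-, hq⟩)
      · simp; omega
      · simp; omega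
      · exact hq
    have e1 := hev _ ((PFun.mem_dom _ _).mpr ⟨[], h1⟩)
    have e2 := hev _ ((PFun.mem_dom _ _).mpr ⟨[], h2⟩)
    simp at e1 e2
    omega



lemma dropLast_primrec : Primrec (fun q : List Bool => q.dropLast) :=
  (Primrec.list_reverse.comp (Primrec.list_tail.comp Primrec.list_reverse)).of_eq
    reverse_tail_reverse

lemma exists_V (Mach : ℕ → (List Bool →. List Bool)) (hMach : MachineEnumeration Mach) :
    ∃ V : List Bool →. List Bool, Partrec V ∧
      (∀ p ∈ (U0 Mach).Dom, p.length % 2 = 1 →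
        V (p ++ [false]) = U0 Mach p ∧ V (p ++ [true]) = U0 Mach p) ∧
      (∀ p ∈ (U0 Mach).Dom, p.length % 2 = 0 → V p = U0 Mach p) ∧
      V.Dom = {q | (∃ p ∈ (U0 Mach).Dom, p.length % 2 = 1 ∧
          (q = p ++ [false] ∨ q = p ++ [true])) ∨
          (q ∈ (U0 Mach).Dom ∧ q.length % 2 = 0)} := by
  have hU0p := U0_partrec hMach.2.1
  have hU0pf := U0_pf hMach
  set f : List Bool →. List Bool :=
    fun q => (Part.ofOption (if q.length % 2 = 0 then some q else none)).bind (U0 Mach) with hfdef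
  set g : List Bool →. List Bool :=
    fun q => (Part.ofOption (if q.length % 2 = 0 ∧ q ≠ [] then some q.dropLast else none)).bind
      (U0 Mach) with hgdef
  have hfmem : ∀ q x, x ∈ f q ↔ q.length % 2 = 0 ∧ x ∈ U0 Mach q := by
    intro q x
    by_cases h : q.length % 2 = 0 <;>
      simp [hfdef, h, Part.mem_bind_iff, Part.mem_ofOption]
    · exact Part.mem_bind_iff.trans ⟨fun ⟨a, ha, hx⟩ => (Part.mem_some_iff.mp ha) ▸ hx,
        fun hx => ⟨q, Part.mem_some q, hx⟩⟩
    · intro hx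
      obtain ⟨a, ha, -⟩ := Part.mem_bind_iff.mp hx
      exact Part.notMem_none a ha
  have hgmem : ∀ q x, x ∈ g q ↔ (q.length % 2 = 0 ∧ q ≠ []) ∧ x ∈ U0 Mach q.dropLast := by
    intro q x
    by_cases h : q.length % 2 = 0 ∧ q ≠ [] <;>
      simp [hgdef, h, Part.mem_bind_iff, Part.mem_ofOption]
    · exact Part.mem_bind_iff.trans ⟨fun ⟨a, ha, hx⟩ => (Part.mem_some_iff.mp ha) ▸ hx,
        fun hx => ⟨q.dropLast, Part.mem_some q.dropLast, hx⟩⟩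
    · intro hx
      obtain ⟨a, ha, -⟩ := Part.mem_bind_iff.mp hx
      exact Part.notMem_none a ha
  have hparity : PrimrecPred fun q : List Bool => q.length % 2 = 0 :=
    Primrec.eq.comp (Primrec.nat_mod.comp Primrec.list_length (Primrec.const 2))
      (Primrec.const 0)
  have hfp : Partrec f := by
    have hfc : Computable fun q : List Bool =>
        if q.length % 2 = 0 then some q else none :=
      (Primrec.ite hparity Primrec.option_some (Primrec.const none)).to_comp
    exact (Computable.ofOption hfc).bind (Partrec.comp hU0p Computable.snd)
  have hgp : Partrec g := by
    have hgc : Computable fun q : List Bool =>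
        if q.length % 2 = 0 ∧ q ≠ [] then some q.dropLast else none :=
      (Primrec.ite (PrimrecPred.and hparity
          (PrimrecPred.not (Primrec.eq.comp Primrec.id (Primrec.const []))))
        (Primrec.option_some.comp dropLast_primrec) (Primrec.const none)).to_comp
    exact (Computable.ofOption hgc).bind (Partrec.comp hU0p Computable.snd)
  have hlen0 : ∀ q : List Bool, q ≠ [] → q.length ≠ 0 := by
    intro q hq h; exact hq (List.length_eq_zero_iff.mp h)
  have H : ∀ q, ∀ x ∈ f q, ∀ y ∈ g q, x = y := by
    intro q x hx y hy
    obtain ⟨hev, hx'⟩ := (hfmem q x).mp hx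
    obtain ⟨⟨-, hne⟩, hy'⟩ := (hgmem q y).mp hy
    exfalso
    have h3 := hU0pf _ ((PFun.mem_dom _ _).mpr ⟨y, hy'⟩) _ ((PFun.mem_dom _ _).mpr ⟨x, hx'⟩)
      (List.dropLast_prefix q)
    have h4 := congrArg List.length h3
    rw [List.length_dropLast] at h4
    have := hlen0 q hne
    omega
  obtain ⟨V, hVp, hVmem⟩ := Partrec.merge hfp hgp H
  refine ⟨V, hVp, ?_, ?_, ?_⟩
  · intro p hp hpodd
    have hpart : ∀ b : Bool, V (p ++ [b]) = U0 Mach p := by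
      intro b
      apply Part.ext
      intro x
      rw [hVmem]
      constructor
      · rintro (hx | hx)
        · exfalso
          obtain ⟨-, hx'⟩ := (hfmem _ _).mp hx
          have h3 := hU0pf p hp _ ((PFun.mem_dom _ _).mpr ⟨x, hx'⟩) (List.prefix_append p [b])
          have := congrArg List.length h3
          simp at this
        · obtain ⟨-, hx'⟩ := (hgmem _ _).mp hx
          rwa [List.dropLast_concat] at hx'
      · intro hx
        refine Or.inr ((hgmem _ _).mpr ⟨⟨by simp; omega, by simp⟩, ?_⟩)
        rwa [List.dropLast_concat]
    exact ⟨hpart false, hpart true⟩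
  · intro p hp hev
    apply Part.ext
    intro x
    rw [hVmem]
    constructor
    · rintro (hx | hx)
      · exact ((hfmem _ _).mp hx).2
      · exfalso
        obtain ⟨⟨-, hne⟩, hx'⟩ := (hgmem _ _).mp hx
        have h3 := hU0pf _ ((PFun.mem_dom _ _).mpr ⟨x, hx'⟩) p hp (List.dropLast_prefix p)
        have h4 := congrArg List.length h3
        rw [List.length_dropLast] at h4
        have := hlen0 p hne
        omega
    · intro hx
      exact Or.inl ((hfmem _ _).mpr ⟨hev, hx⟩)
  · ext q
    constructor
    · intro hq
      obtain ⟨x, hx⟩ := (PFun.mem_dom _ _).mp hq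
      rcases (hVmem _ _).mp hx with hx' | hx'
      · obtain ⟨hev, hx''⟩ := (hfmem _ _).mp hx'
        exact Or.inr ⟨(PFun.mem_dom _ _).mpr ⟨x, hx''⟩, hev⟩
      · obtain ⟨⟨hev, hne⟩, hx''⟩ := (hgmem _ _).mp hx'
        refine Or.inl ⟨q.dropLast, (PFun.mem_dom _ _).mpr ⟨x, hx''⟩, ?_, ?_⟩
        · rw [List.length_dropLast]
          have := hlen0 q hne
          omega
        · have hq' := List.dropLast_append_getLast hne
          cases hb : q.getLast hne
          · exact Or.inl (by conv_lhs => rw [← hq', hb])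
          · exact Or.inr (by conv_lhs => rw [← hq', hb])
    · rintro (⟨p, hp, hpodd, hqe⟩ | ⟨hq, hev⟩)
      · obtain ⟨x, hx⟩ := (PFun.mem_dom _ _).mp hp
        obtain ⟨b, rfl⟩ : ∃ b, q = p ++ [b] := by
          rcases hqe with rfl | rfl; exacts [⟨false, rfl⟩, ⟨true, rfl⟩]
        refine (PFun.mem_dom _ _).mpr ⟨x, (hVmem _ _).mpr (Or.inr ((hgmem _ _).mpr
          ⟨⟨by simp; omega, by simp⟩, ?_⟩))⟩
        rwa [List.dropLast_concat]
      · obtain ⟨x, hx⟩ := (PFun.mem_dom _ _).mp hq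
        exact (PFun.mem_dom _ _).mpr ⟨x, (hVmem _ _).mpr (Or.inl ((hfmem _ _).mpr ⟨hev, hx⟩))⟩

/-- There is an optimal prefix-free machine that is not universal
by adjunction; in particular, from any universal-by-adjunction machine `U`,
the machine `V` with `V(p0) = V(p1) = U(p)` for `|p|` odd and `V(p) = U(p)`
for `|p|` even is prefix-free and optimal but not universal by adjunction. -/
theorem optimal_not_universal_by_adjunction
    (Mach : ℕ → (List Bool →. List Bool)) (hMach : MachineEnumeration Mach) :
    (∃ M : List Bool →. List Bool,
        OptimalMachine M ∧ ¬ UniversalByAdjunction Mach M) ∧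
    ∀ U : List Bool →. List Bool, UniversalByAdjunction Mach U →
      ∀ V : List Bool →. List Bool, Partrec V →
        (∀ p ∈ U.Dom, p.length % 2 = 1 →
          V (p ++ [false]) = U p ∧ V (p ++ [true]) = U p) →
        (∀ p ∈ U.Dom, p.length % 2 = 0 → V p = U p) →
        V.Dom = {q | (∃ p ∈ U.Dom, p.length % 2 = 1 ∧
            (q = p ++ [false] ∨ q = p ++ [true])) ∨
            (q ∈ U.Dom ∧ q.length % 2 = 0)} →
        PrefixFreeMachine V ∧ OptimalMachine V ∧
          ¬ UniversalByAdjunction Mach V := by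
  constructor
  · obtain ⟨V, hVp, hodd, heven, hdom⟩ := exists_V Mach hMach
    obtain ⟨hpf, hopt, hnuba⟩ := key Mach hMach (U0 Mach) (U0_uba hMach) V hVp hodd heven hdom
    exact ⟨V, hopt, hnuba⟩
  · intro U hU V hVp h1 h2 h3
    exact key Mach hMach U hU V hVp h1 h2 h3


end Paper
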